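/- arXiv:2002.09320 — 2 statements merged into one kernel-verified Lean document; each statement's English description precedes it below -/
import Mathlib

section
/- Let f be a factor over a finite variable set S and g a factor over a finite variable set T, and let X be a subset of S with X ∩ T = ∅ (the variables X appear in f but not in g). Then summing out X from the product f·g equals the product of g with the result of summing out X from f; that is, ∑_X (f·g) = g · (∑_X f) as factors over (S ∪ T) \ X. -/
/-- An instantiation of the variables in `S`, where variable `i` has value set `V i`. -/
abbrev Inst {ι : Type*} (V : ι → Type*) (S : Finset ι) : Type _ :=
  ∀ i : S, V i

/-- Restrict an instantiation of `T` to a subset `S ⊆ T`. -/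
def Inst.restrict {ι : Type*} {V : ι → Type*} {S T : Finset ι} (h : S ⊆ T)
    (z : Inst V T) : Inst V S :=
  fun i => z ⟨i, h i.2⟩

/-- Transport an instantiation along an equality of variable sets. -/
def Inst.cast {ι : Type*} {V : ι → Type*} {S T : Finset ι} (h : S = T)
    (z : Inst V S) : Inst V T :=
  fun i => z ⟨i, h.symm ▸ i.2⟩

/-- Extend an instantiation `u` of `U` with a value `x` for the variable `X`,
yielding an instantiation of `insert X U`. -/
def Inst.consX {ι : Type*} [DecidableEq ι] {V : ι → Type*} {U : Finset ι} (X : ι)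
    (x : V X) (u : Inst V U) : Inst V (insert X U) :=
  fun i => if h : (i : ι) = X then _root_.cast (congrArg V h).symm x
           else u ⟨i, (Finset.mem_insert.mp i.2).resolve_left h⟩

/-- Extend an instantiation `w` of `W \ {X}` with a value `x` for `X ∈ W`,
yielding an instantiation of `W`. -/
def Inst.extendAt {ι : Type*} [DecidableEq ι] {V : ι → Type*} {W : Finset ι} (X : ι)
    (_hX : X ∈ W) (x : V X) (w : Inst V (W \ {X})) : Inst V W :=
  fun i => if h : (i : ι) = X then _root_.cast (congrArg V h).symm x
           else w ⟨i, Finset.mem_sdiff.mpr ⟨i.2, Finset.notMem_singleton.mpr h⟩⟩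

/-- The product of a factor over `S` and a factor over `T` is a factor over `S ∪ T`. -/
def Factor.mul {ι : Type*} [DecidableEq ι] {V : ι → Type*} {S T : Finset ι}
    (f : Inst V S → ℝ) (g : Inst V T → ℝ) : Inst V (S ∪ T) → ℝ :=
  fun z => f (fun i => z ⟨i, Finset.mem_union_left _ i.2⟩) *
           g (fun i => z ⟨i, Finset.mem_union_right _ i.2⟩)

/-- Summing out the variables `Y ⊆ S` from a factor over `S` yields a factor over `S \ Y`. -/
noncomputable def Factor.sumOut {ι : Type*} [DecidableEq ι] {V : ι → Type*}
    [∀ i, Fintype (V i)] {S : Finset ι} (Y : Finset ι) (_hY : Y ⊆ S)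
    (f : Inst V S → ℝ) : Inst V (S \ Y) → ℝ :=
  fun z => ∑ y : Inst V Y, f fun i =>
    if h : (i : ι) ∈ Y then y ⟨i, h⟩ else z ⟨i, Finset.mem_sdiff.mpr ⟨i.2, h⟩⟩

/-- **Theorem 2 of the paper.** If the variables `X` appear in factor `f`
(over `S`) but not in factor `g` (over `T`), then `∑_X (f·g) = g · (∑_X f)`
as factors over `(S ∪ T) \ X`. -/
theorem sumOut_mul_of_not_mem {ι : Type*} [DecidableEq ι] (V : ι → Type*)
    [∀ i, Fintype (V i)] [∀ i, Nonempty (V i)]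
    (S T X : Finset ι) (hXS : X ⊆ S) (hXT : X ∩ T = ∅)
    (f : Inst V S → ℝ) (g : Inst V T → ℝ) :
    ∀ z : Inst V ((S ∪ T) \ X),
      Factor.sumOut X (hXS.trans Finset.subset_union_left) (Factor.mul f g) z
        = Factor.mul g (Factor.sumOut X hXS f)
            (Inst.cast
              (by
                have hd := Finset.disjoint_left.mp (Finset.disjoint_iff_inter_eq_empty.mpr hXT)
                ext a
                simp only [Finset.mem_sdiff, Finset.mem_union]
                constructor
                · rintro ⟨h1 | h2, h3⟩
                  · exact Or.inr ⟨h1, h3⟩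
                  · exact Or.inl h2
                · rintro (h1 | ⟨h2, h3⟩)
                  · exact ⟨Or.inr h1, fun hx => hd hx h1⟩
                  · exact ⟨Or.inl h2, h3⟩) z) := by
  intro z
  have hd := Finset.disjoint_left.mp (Finset.disjoint_iff_inter_eq_empty.mpr hXT)
  simp only [Factor.sumOut, Factor.mul, Inst.cast, Finset.mul_sum]
  refine Finset.sum_congr rfl fun y _ => ?_
  rw [mul_comm]
  congr 1
  · congr 1
    funext i
    have hiT : (i : ι) ∈ T := i.2
    have hiX : (i : ι) ∉ X := fun hx => hd hx hiT
    simp [hiX]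
end

section
/- Let X be a variable with parent set U (X ∉ U) and let f be a functional CPT for X over {X} ∪ U; for each instantiation u of U let φ(u) denote the unique value x of X with f(x,u) = 1. Let H be a factor over a variable set W ⊇ {X} ∪ U of the form H = f · H₀ for some factor H₀. Then summing X out of H merely selects the functional value: for every instantiation w of W \ {X}, (∑_X H)(w) = H(φ(u), w), where u is the restriction of w to U. -/
/-- Let `f` be a functional CPT for `X` with parents `U`, and let `φ(u)`
be the unique value of `X` with `f(φ(u), u) = 1`. If the product `H` (over `W ⊇ {X} ∪ U`)
contains `f` as a multiplicand, then summing `X` out of `H` merely selects the functional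
value: `(∑_X H)(w) = H(φ(u), w)` where `u` is the restriction of `w` to `U`. -/
theorem sumOut_functional_selects {ι : Type*} [DecidableEq ι] (V : ι → Type*)
    [∀ i, Fintype (V i)] [∀ i, Nonempty (V i)]
    (X : ι) (U : Finset ι) (hXU : X ∉ U)
    (f : Inst V (insert X U) → ℝ)
    (hfun : ∀ (x : V X) (u : Inst V U),
      f (Inst.consX X x u) = 0 ∨ f (Inst.consX X x u) = 1)
    (hcpt : ∀ u : Inst V U, ∑ x : V X, f (Inst.consX X x u) = 1)
    (φ : Inst V U → V X)
    (hφ : ∀ u : Inst V U, f (Inst.consX X (φ u) u) = 1)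
    (hφu : ∀ (u : Inst V U) (x : V X), f (Inst.consX X x u) = 1 → x = φ u)
    (W : Finset ι) (hW : insert X U ⊆ W)
    (H : Inst V W → ℝ)
    (H₀ : Inst V W → ℝ) (hH : ∀ z : Inst V W, H z = f (Inst.restrict hW z) * H₀ z) :
    ∀ w : Inst V (W \ {X}),
      Factor.sumOut {X}
          (Finset.singleton_subset_iff.mpr (hW (Finset.mem_insert_self X U))) H w
        = H (Inst.extendAt X (hW (Finset.mem_insert_self X U))
              (φ (Inst.restrict
                    (Finset.subset_sdiff.mpr
                      ⟨(Finset.subset_insert X U).trans hW,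
                        Finset.disjoint_singleton_right.mpr hXU⟩) w))
              w) := by
  intro w
  set hXW : X ∈ W := hW (Finset.mem_insert_self X U) with hXWdef
  set hUW : U ⊆ W \ {X} := Finset.subset_sdiff.mpr
      ⟨(Finset.subset_insert X U).trans hW,
        Finset.disjoint_singleton_right.mpr hXU⟩ with hUWdef
  set u : Inst V U := Inst.restrict hUW w with hu
  -- combined instantiation in sumOut equals extendAt
  have hcomb : ∀ y : Inst V ({X} : Finset ι),
      (fun i : W => if h : (i : ι) ∈ ({X} : Finset ι) then y ⟨i, h⟩
        else w ⟨i, Finset.mem_sdiff.mpr ⟨i.2, h⟩⟩)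
      = Inst.extendAt X hXW (y ⟨X, Finset.mem_singleton_self X⟩) w := by
    intro y
    funext i
    unfold Inst.extendAt
    by_cases h : (i : ι) = X
    · rw [dif_pos (Finset.mem_singleton.mpr h), dif_pos h]
      obtain ⟨i, hi⟩ := i
      subst h
      rfl
    · rw [dif_neg (fun hh => h (Finset.mem_singleton.mp hh)), dif_neg h]
  have hrestr : ∀ x : V X,
      Inst.restrict hW (Inst.extendAt X hXW x w) = Inst.consX X x u := by
    intro x
    funext i
    unfold Inst.restrict Inst.extendAt Inst.consX
    by_cases h : (i : ι) = X
    · rw [dif_pos h, dif_pos h]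
    · rw [dif_neg h, dif_neg h]
      rfl
  have hzero : ∀ x : V X, x ≠ φ u → H (Inst.extendAt X hXW x w) = 0 := by
    intro x hx
    rw [hH, hrestr]
    rcases hfun x u with h | h
    · rw [h, zero_mul]
    · exact absurd (hφu u x h) hx
  unfold Factor.sumOut
  let e : Inst V ({X} : Finset ι) ≃ V X :=
    { toFun := fun y => y ⟨X, Finset.mem_singleton_self X⟩
      invFun := fun x i => _root_.cast (congrArg V (Finset.mem_singleton.mp i.2).symm) x
      left_inv := by
        intro y
        funext i
        obtain ⟨i, hi⟩ := i
        have := Finset.mem_singleton.mp hi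
        subst this
        rfl
      right_inv := fun x => rfl }
  calc (∑ y : Inst V ({X} : Finset ι), H fun i =>
        if h : (i : ι) ∈ ({X} : Finset ι) then y ⟨i, h⟩
        else w ⟨i, Finset.mem_sdiff.mpr ⟨i.2, h⟩⟩)
      = ∑ y : Inst V ({X} : Finset ι),
          H (Inst.extendAt X hXW (y ⟨X, Finset.mem_singleton_self X⟩) w) := by
        exact Finset.sum_congr rfl fun y _ => by rw [hcomb y]
    _ = ∑ x : V X, H (Inst.extendAt X hXW x w) :=
        Fintype.sum_equiv e _ _ (fun y => rfl)
    _ = H (Inst.extendAt X hXW (φ u) w) := by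
        rw [Fintype.sum_eq_single (φ u) (fun x hx => hzero x hx)]
end
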